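/- Let 𝔽_q be a finite field with q elements, F = 𝔽_q(T) the field of rational functions over 𝔽_q, and let D be a division ring equipped with an F-algebra structure such that the image of F is the center of D and dim_F D = 4 (a quaternion division algebra over F). If γ ∈ D satisfies γ^n = 1 for some integer n ≥ 1, then γ^{q² − 1} = 1; that is, γ lies in a finite subfield of D of cardinality dividing q², so either γ ∈ 𝔽_q^× or γ generates a copy of 𝔽_{q²}. -/

import Mathlib

open Polynomial

/-- `RatFunc.X` is transcendental over the coefficient field. -/
lemma aux_aeval_ratFuncX_eq_zero {𝔽 : Type*} [Field 𝔽] {p : 𝔽[X]}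
    (hp : Polynomial.aeval (RatFunc.X : RatFunc 𝔽) p = 0) : p = 0 := by
  rw [← RatFunc.algebraMap_X, Polynomial.aeval_algebraMap_apply,
    Polynomial.aeval_X_left_apply] at hp
  exact RatFunc.algebraMap_injective 𝔽 (by simpa using hp)

set_option maxHeartbeats 2000000 in
theorem torsion_in_quaternion_algebra_over_ratFunc
    (𝔽 : Type*) [Field 𝔽] [Fintype 𝔽] (q : ℕ) (hq : Fintype.card 𝔽 = q)
    (D : Type*) [DivisionRing D] [Algebra (RatFunc 𝔽) D]
    (hcenter : (algebraMap (RatFunc 𝔽) D).range = Subring.center D)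
    (hdim : Module.finrank (RatFunc 𝔽) D = 4)
    (γ : D) (n : ℕ) (hn : 1 ≤ n) (hγ : γ ^ n = 1) :
    γ ^ (q ^ 2 - 1) = 1 := by
  letI : Algebra 𝔽 D := ((algebraMap (RatFunc 𝔽) D).comp (algebraMap 𝔽 (RatFunc 𝔽))).toAlgebra' (by
    intro c x
    have : ((algebraMap (RatFunc 𝔽) D).comp (algebraMap 𝔽 (RatFunc 𝔽))) c ∈
        Subring.center D := hcenter ▸ ⟨algebraMap 𝔽 (RatFunc 𝔽) c, rfl⟩
    exact (Subring.mem_center_iff.mp this x).symm)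
  letI : IsScalarTower 𝔽 (RatFunc 𝔽) D := IsScalarTower.of_algebraMap_eq fun x => rfl
  haveI : FiniteDimensional (RatFunc 𝔽) D :=
    FiniteDimensional.of_finrank_pos (by rw [hdim]; norm_num)
  set t : D := algebraMap (RatFunc 𝔽) D RatFunc.X with ht
  have htc : ∀ x : D, x * t = t * x := by
    intro x
    have : t ∈ Subring.center D := hcenter ▸ ⟨RatFunc.X, rfl⟩
    exact Subring.mem_center_iff.mp this x
  have hγ0 : γ ≠ 0 := by
    intro h
    rw [h, zero_pow (by omega : n ≠ 0)] at hγ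
    exact zero_ne_one hγ
  -- the finite field L = 𝔽[γ]
  set L : Subalgebra 𝔽 D := Algebra.adjoin 𝔽 {γ} with hL
  letI : CommRing ↥L := Algebra.adjoinCommRingOfComm 𝔽 (by
    rintro a rfl b rfl; rfl)
  haveI : IsDomain ↥L := Function.Injective.isDomain L.toSubring.subtype
    Subtype.coe_injective
  have hγint : IsIntegral 𝔽 γ :=
    ⟨X ^ n - 1, monic_X_pow_sub_C 1 (by omega), by simp [hγ]⟩
  haveI : Module.Finite 𝔽 ↥L := ⟨(Submodule.fg_top _).mpr hγint.fg_adjoin_singleton⟩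
  haveI : Finite ↥L := Module.finite_of_finite 𝔽
  letI : Field ↥L := (Finite.isField_of_domain ↥L).toField
  -- key vanishing claim
  have key : ∀ (N : ℕ) (β : ℕ → D), (∀ j, β j ∈ L) →
      (∑ j ∈ Finset.range N, t ^ j * β j) = 0 → ∀ j < N, β j = 0 := by
    intro N β hβ hsum
    by_contra hcon
    push_neg at hcon
    obtain ⟨j0, hj0N, hj0⟩ := hcon
    set Cs : Subalgebra 𝔽 D := Algebra.adjoin 𝔽 {γ, t} with hCs
    letI : CommRing ↥Cs := Algebra.adjoinCommRingOfComm 𝔽 (by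
      intro a ha b hb
      simp only [Set.mem_insert_iff, Set.mem_singleton_iff] at ha hb
      rcases ha with rfl | rfl <;> rcases hb with rfl | rfl
      · rfl
      · exact htc a
      · exact (htc b).symm
      · rfl)
    haveI : IsDomain ↥Cs :=
      Function.Injective.isDomain Cs.toSubring.subtype Subtype.coe_injective
    have hLC : L ≤ Cs := Algebra.adjoin_mono (by simp)
    have htCs : t ∈ Cs := Algebra.subset_adjoin (by simp)
    letI : Algebra ↥L ↥Cs := (Subalgebra.inclusion hLC).toRingHom.toAlgebra
    letI : IsScalarTower 𝔽 ↥L ↥Cs := IsScalarTower.of_algebraMap_eq fun x => rfl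
    haveI : Algebra.IsIntegral 𝔽 ↥L := Algebra.IsIntegral.of_finite _ _
    set tC : ↥Cs := ⟨t, htCs⟩ with htCdef
    set P : Polynomial ↥L :=
      ∑ j ∈ Finset.range N, Polynomial.monomial j (⟨β j, hβ j⟩ : ↥L) with hP
    have hPco : ∀ j0' ∈ Finset.range N, P.coeff j0' = ⟨β j0', hβ j0'⟩ := by
      intro j1 hj1
      rw [hP, Polynomial.finset_sum_coeff, Finset.sum_eq_single j1]
      · simp [Polynomial.coeff_monomial]
      · intro b _ hbne; simp [Polynomial.coeff_monomial, hbne]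
      · intro h; exact absurd hj1 h
    have hPne : P ≠ 0 := by
      intro h0
      have h1 := hPco j0 (Finset.mem_range.mpr hj0N)
      rw [h0, Polynomial.coeff_zero] at h1
      exact hj0 (congrArg Subtype.val h1).symm
    have hPev : Polynomial.aeval tC P = 0 := by
      have hcoe : ((Polynomial.aeval tC P : ↥Cs) : D) = 0 := by
        rw [hP, map_sum, AddSubmonoidClass.coe_finset_sum, ← hsum]
        refine Finset.sum_congr rfl fun j _ => ?_
        rw [Polynomial.aeval_monomial, MulMemClass.coe_mul, SubmonoidClass.coe_pow]
        have h1 : ((algebraMap ↥L ↥Cs ⟨β j, hβ j⟩ : ↥Cs) : D) = β j := rfl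
        have h2 : ((tC : ↥Cs) : D) = t := rfl
        rw [h1, h2]
        exact Commute.pow_right (htc (β j)) j
      exact Subtype.coe_injective hcoe
    have halg : IsAlgebraic ↥L tC := ⟨P, hPne, hPev⟩
    have hintL : IsIntegral ↥L tC := halg.isIntegral
    have hint𝔽 : IsIntegral 𝔽 tC := isIntegral_trans tC hintL
    have hintt : IsIntegral 𝔽 t := by
      have := hint𝔽.map Cs.val
      simpa using this
    obtain ⟨p, hpm, hpev⟩ := hintt
    rw [← Polynomial.aeval_def, ht, Polynomial.aeval_algebraMap_apply] at hpev
    have hz : Polynomial.aeval (RatFunc.X : RatFunc 𝔽) p = 0 := by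
      apply (algebraMap (RatFunc 𝔽) D).injective
      rw [map_zero]; exact hpev
    exact hpm.ne_zero (aux_aeval_ratFuncX_eq_zero hz)
  -- transfer of linear independence from 𝔽 to RatFunc 𝔽
  have transfer : ∀ (s : ℕ) (v : Fin s → D), (∀ i, v i ∈ L) →
      LinearIndependent 𝔽 v → LinearIndependent (RatFunc 𝔽) v := by
    intro s v hvL hv
    rw [Fintype.linearIndependent_iff] at hv ⊢
    intro g hg
    obtain ⟨b, hb⟩ := IsLocalization.exist_integer_multiples
      (nonZeroDivisors (Polynomial 𝔽)) Finset.univ g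
    choose p hp using fun i => hb i (Finset.mem_univ i)
    set N : ℕ := (Finset.univ.sup fun i => (p i).natDegree) + 1 with hN
    have hdeg : ∀ i, (p i).natDegree < N := fun i =>
      Nat.lt_succ_of_le (Finset.le_sup (f := fun i => (p i).natDegree) (Finset.mem_univ i))
    have hβmem : ∀ j, (∑ i, (p i).coeff j • v i) ∈ L := fun j =>
      Subalgebra.sum_mem L fun i _ => Subalgebra.smul_mem L (hvL i) _
    have h2 : ∀ i, Polynomial.aeval t (p i) =
        algebraMap (RatFunc 𝔽) D ((b : Polynomial 𝔽) • g i) := by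
      intro i
      rw [← hp i, ht, Polynomial.aeval_algebraMap_apply, ← RatFunc.algebraMap_X,
        Polynomial.aeval_algebraMap_apply, Polynomial.aeval_X_left_apply]
    have h1 : ∑ i, Polynomial.aeval t (p i) * v i = 0 := by
      calc ∑ i, Polynomial.aeval t (p i) * v i
          = ∑ i, algebraMap (RatFunc 𝔽) D (algebraMap (Polynomial 𝔽) (RatFunc 𝔽)
              (b : Polynomial 𝔽)) * (g i • v i) := by
            refine Finset.sum_congr rfl fun i _ => ?_
            rw [h2 i, Algebra.smul_def (b : Polynomial 𝔽) (g i), map_mul, mul_assoc]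
            congr 1
            rw [Algebra.smul_def]
        _ = algebraMap (RatFunc 𝔽) D (algebraMap (Polynomial 𝔽) (RatFunc 𝔽)
              (b : Polynomial 𝔽)) * ∑ i, g i • v i := by rw [Finset.mul_sum]
        _ = 0 := by rw [hg, mul_zero]
    have hmain : ∑ j ∈ Finset.range N, t ^ j * (∑ i, (p i).coeff j • v i) = 0 := by
      calc ∑ j ∈ Finset.range N, t ^ j * ∑ i, (p i).coeff j • v i
          = ∑ j ∈ Finset.range N, ∑ i, (p i).coeff j • (t ^ j * v i) := by
            refine Finset.sum_congr rfl fun j _ => ?_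
            rw [Finset.mul_sum]
            exact Finset.sum_congr rfl fun i _ => (mul_smul_comm _ _ _)
        _ = ∑ i, ∑ j ∈ Finset.range N, (p i).coeff j • (t ^ j * v i) := Finset.sum_comm
        _ = ∑ i, Polynomial.aeval t (p i) * v i := by
            refine Finset.sum_congr rfl fun i _ => ?_
            rw [Polynomial.aeval_eq_sum_range' (hdeg i), Finset.sum_mul]
            exact Finset.sum_congr rfl fun j _ => (smul_mul_assoc _ _ _).symm
        _ = 0 := h1
    have hβ0 : ∀ j < N, (∑ i, (p i).coeff j • v i) = 0 :=
      key N (fun j => ∑ i, (p i).coeff j • v i) hβmem hmain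
    have hc0 : ∀ i, p i = 0 := by
      intro i
      refine Polynomial.ext fun j => ?_
      rw [Polynomial.coeff_zero]
      by_cases hjN : j < N
      · exact hv (fun i' => (p i').coeff j) (hβ0 j hjN) i
      · exact Polynomial.coeff_eq_zero_of_natDegree_lt ((hdeg i).trans_le (not_lt.mp hjN))
    intro i
    have hz : (b : Polynomial 𝔽) • g i = 0 := by rw [← hp i, hc0 i, map_zero]
    have hbne : (algebraMap (Polynomial 𝔽) (RatFunc 𝔽)) (b : Polynomial 𝔽) ≠ 0 :=
      IsFractionRing.to_map_ne_zero_of_mem_nonZeroDivisors b.2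
    rw [Algebra.smul_def] at hz
    exact (mul_eq_zero.mp hz).resolve_left hbne
  -- the field K = F[γ]
  set K : Subalgebra (RatFunc 𝔽) D := Algebra.adjoin (RatFunc 𝔽) {γ} with hK
  letI : CommRing ↥K := Algebra.adjoinCommRingOfComm (RatFunc 𝔽) (by
    rintro a rfl b rfl; rfl)
  haveI : IsDomain ↥K :=
    Function.Injective.isDomain K.toSubring.subtype Subtype.coe_injective
  haveI : FiniteDimensional (RatFunc 𝔽) ↥K := inferInstance
  haveI : Algebra.IsIntegral (RatFunc 𝔽) ↥K := Algebra.IsIntegral.of_finite _ _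
  letI : Field ↥K := (isField_of_isIntegral_of_isField' (Field.toIsField (RatFunc 𝔽))).toField
  have htower : Module.finrank (RatFunc 𝔽) ↥K * Module.finrank ↥K D = 4 := by
    rw [Module.finrank_mul_finrank]; exact hdim
  have hm1 : Module.finrank ↥K D ≠ 1 := by
    intro h1
    have hsmul : ∀ (k : ↥K) (x : D), k • x = (k : D) * x := fun _ _ => rfl
    obtain ⟨v, hv0, hvall⟩ := finrank_eq_one_iff'.mp h1
    obtain ⟨c1, hc1⟩ := hvall 1
    rw [hsmul] at hc1
    have hvinv : v = ((c1 : D))⁻¹ := (inv_eq_of_mul_eq_one_right hc1).symm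
    have hKall : ∀ x : D, ∃ k : ↥K, x = (k : D) := by
      intro x
      obtain ⟨c, hc⟩ := hvall x
      refine ⟨c * c1⁻¹, ?_⟩
      rw [← hc, hsmul, hvinv, MulMemClass.coe_mul]
      congr 1
      exact (map_inv₀ K.val c1).symm
    have hcomm : ∀ x y : D, x * y = y * x := by
      intro x y
      obtain ⟨kx, rfl⟩ := hKall x
      obtain ⟨ky, rfl⟩ := hKall y
      rw [← MulMemClass.coe_mul, ← MulMemClass.coe_mul, mul_comm kx ky]
    have hsurj : Function.Surjective (algebraMap (RatFunc 𝔽) D) := by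
      intro x
      have hx : x ∈ Subring.center D := Subring.mem_center_iff.mpr fun g => hcomm g x
      rw [← hcenter] at hx
      exact hx
    have he : Module.finrank (RatFunc 𝔽) D = 1 := by
      have e := LinearEquiv.ofBijective (Algebra.linearMap (RatFunc 𝔽) D)
        ⟨(algebraMap (RatFunc 𝔽) D).injective, hsurj⟩
      rw [← e.finrank_eq, Module.finrank_self]
    rw [hdim] at he
    omega
  have he2 : Module.finrank (RatFunc 𝔽) ↥K ≤ 2 := by
    by_contra h
    push_neg at h
    have hm0 : Module.finrank ↥K D ≠ 0 := by
      intro h0; rw [h0, mul_zero] at htower; omega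
    have hm2 : 2 ≤ Module.finrank ↥K D := by omega
    have h6 := Nat.mul_le_mul h hm2
    rw [htower] at h6
    omega
  -- s := finrank 𝔽 L ≤ 2
  have hs2 : Module.finrank 𝔽 ↥L ≤ 2 := by
    refine le_trans ?_ he2
    set sL := Module.finrank 𝔽 ↥L with hsL
    let bL := Module.finBasis 𝔽 ↥L
    set v : Fin sL → D := fun i => (bL i : D) with hvdef
    have hvL : ∀ i, v i ∈ L := fun i => (bL i).2
    have hv𝔽 : LinearIndependent 𝔽 v := by
      have := bL.linearIndependent.map' L.val.toLinearMap
        (LinearMap.ker_eq_bot.mpr Subtype.coe_injective)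
      exact this
    have hvF : LinearIndependent (RatFunc 𝔽) v := transfer sL v hvL hv𝔽
    have hγK : γ ∈ K := Algebra.subset_adjoin rfl
    have hLK : L ≤ Subalgebra.restrictScalars 𝔽 K :=
      Algebra.adjoin_le (Set.singleton_subset_iff.mpr hγK)
    have hvK : ∀ i, v i ∈ K := fun i => hLK (hvL i)
    set w : Fin sL → ↥K := fun i => ⟨v i, hvK i⟩ with hwdef
    have hwind : LinearIndependent (RatFunc 𝔽) w := by
      apply LinearIndependent.of_comp K.val.toLinearMap
      exact hvF
    simpa using hwind.fintype_card_le_finrank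
  have hs1 : 1 ≤ Module.finrank 𝔽 ↥L := Module.finrank_pos
  -- conclude
  haveI : Fintype ↥L := Fintype.ofFinite _
  have hcard : Fintype.card ↥L = q ^ Module.finrank 𝔽 ↥L := by
    rw [← hq]; exact Module.card_eq_pow_finrank
  set s := Module.finrank 𝔽 ↥L with hsdef
  have hγL : γ ∈ L := Algebra.subset_adjoin rfl
  have hpow : γ ^ (q ^ s - 1) = 1 := by
    have h := FiniteField.pow_card_sub_one_eq_one (⟨γ, hγL⟩ : ↥L)
      (fun h0 => hγ0 (congrArg Subtype.val h0))
    have h2 := congrArg (Subalgebra.val L) h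
    rw [map_pow] at h2
    simpa [hcard] using h2
  have hq2 : 2 ≤ q := by rw [← hq]; exact Fintype.one_lt_card
  have hdvd : q ^ s - 1 ∣ q ^ 2 - 1 := by
    interval_cases s
    · simpa using Nat.sub_dvd_pow_sub_pow q 1 2
    · exact dvd_rfl
  obtain ⟨c, hc⟩ := hdvd
  rw [hc, pow_mul, hpow, one_pow]
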